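/- arXiv:1309.4521 — 7 statements merged into one kernel-verified Lean document; each statement's English description precedes it below -/
import Mathlib

section
/- Let (V, L) be a q-uniform hypergraph in which any two vertices are contained in at most one hyperedge, and suppose every vertex lies in at least q hyperedges. Then for every set A of q vertices, the number of hyperedges intersecting A is at least q(q+1)/2, and in particular at least q^2/2. -/
/-- A `q`-uniform linear hypergraph in which every vertex has degree at least `q`:
every set `A` of `q` vertices meets at least `q(q+1)/2` hyperedges, in particular
at least `q²/2`. -/
theorem stmt0 {V : Type} [Fintype V] [DecidableEq V] (q : ℕ)
    (L : Finset (Finset V))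
    (huniform : ∀ e ∈ L, e.card = q)
    (hlinear : ∀ u v : V, u ≠ v → (L.filter (fun e => u ∈ e ∧ v ∈ e)).card ≤ 1)
    (hdeg : ∀ v : V, q ≤ (L.filter (fun e => v ∈ e)).card) :
    ∀ A : Finset V, A.card = q →
      ((q : ℝ) * (q + 1)) / 2 ≤ ((L.filter (fun e => (e ∩ A).Nonempty)).card : ℝ) ∧
      (q : ℝ) ^ 2 / 2 ≤ ((L.filter (fun e => (e ∩ A).Nonempty)).card : ℝ) := by
  have key : ∀ A : Finset V, ∑ i ∈ Finset.range A.card, (q - i) ≤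
      (L.filter (fun e => (e ∩ A).Nonempty)).card := by
    intro A
    induction A using Finset.induction_on with
    | empty => simp
    | @insert a s ha ih =>
      rw [Finset.card_insert_of_notMem ha, Finset.sum_range_succ]
      -- T1 : edges meeting s ; T2 : edges containing a but not meeting s
      set T1 := L.filter (fun e => (e ∩ s).Nonempty) with hT1
      set T2 := L.filter (fun e => a ∈ e ∧ ¬(e ∩ s).Nonempty) with hT2
      have hdisj : Disjoint T1 T2 := by
        rw [Finset.disjoint_left]
        intro e he1 he2
        rw [hT1, Finset.mem_filter] at he1
        rw [hT2, Finset.mem_filter] at he2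
        exact he2.2.2 he1.2
      have hsub : T1 ∪ T2 ⊆ L.filter (fun e => (e ∩ insert a s).Nonempty) := by
        intro e he
        rcases Finset.mem_union.1 he with h | h
        · rw [hT1, Finset.mem_filter] at h
          rw [Finset.mem_filter]
          obtain ⟨u, hu⟩ := h.2
          rw [Finset.mem_inter] at hu
          exact ⟨h.1, ⟨u, Finset.mem_inter.2 ⟨hu.1, Finset.mem_insert_of_mem hu.2⟩⟩⟩
        · rw [hT2, Finset.mem_filter] at h
          rw [Finset.mem_filter]
          exact ⟨h.1, ⟨a, Finset.mem_inter.2 ⟨h.2.1, Finset.mem_insert_self a s⟩⟩⟩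
      -- edges through a meeting s are at most s.card
      have h3 : (L.filter (fun e => a ∈ e ∧ (e ∩ s).Nonempty)).card ≤ s.card := by
        have hsub2 : L.filter (fun e => a ∈ e ∧ (e ∩ s).Nonempty) ⊆
            s.biUnion (fun u => L.filter (fun e => a ∈ e ∧ u ∈ e)) := by
          intro e he
          rw [Finset.mem_filter] at he
          obtain ⟨u, hu⟩ := he.2.2
          rw [Finset.mem_inter] at hu
          exact Finset.mem_biUnion.2 ⟨u, hu.2, Finset.mem_filter.2 ⟨he.1, he.2.1, hu.1⟩⟩
        calc (L.filter (fun e => a ∈ e ∧ (e ∩ s).Nonempty)).card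
            ≤ (s.biUnion (fun u => L.filter (fun e => a ∈ e ∧ u ∈ e))).card :=
              Finset.card_le_card hsub2
          _ ≤ ∑ u ∈ s, (L.filter (fun e => a ∈ e ∧ u ∈ e)).card :=
              Finset.card_biUnion_le
          _ ≤ ∑ u ∈ s, 1 := by
              refine Finset.sum_le_sum fun u hu => ?_
              exact hlinear a u (fun h => ha (h ▸ hu))
          _ = s.card := by simp
      -- degree bound gives q - s.card ≤ T2.card
      have h4 : q - s.card ≤ T2.card := by
        have hsplit : L.filter (fun e => a ∈ e) =
            T2 ∪ L.filter (fun e => a ∈ e ∧ (e ∩ s).Nonempty) := by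
          rw [hT2, Finset.filter_union_right]
          apply Finset.filter_congr
          intro e _
          constructor
          · intro h; by_cases hs : (e ∩ s).Nonempty
            · exact Or.inr ⟨h, hs⟩
            · exact Or.inl ⟨h, hs⟩
          · rintro (h | h) <;> exact h.1
        have := hdeg a
        rw [hsplit] at this
        have hle := Finset.card_union_le T2 (L.filter (fun e => a ∈ e ∧ (e ∩ s).Nonempty))
        omega
      have hmain : T1.card + T2.card ≤
          (L.filter (fun e => (e ∩ insert a s).Nonempty)).card := by
        rw [← Finset.card_union_of_disjoint hdisj]
        exact Finset.card_le_card hsub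
      have := ih
      omega
  intro A hA
  have hkey := key A
  rw [hA] at hkey
  have hsumgen : ∀ n : ℕ, 2 * ∑ i ∈ Finset.range n, (n - i) = n * (n + 1) := by
    intro n
    induction n with
    | zero => simp
    | succ n ih =>
      rw [Finset.sum_range_succ']
      simp only [Nat.succ_sub_succ, Nat.sub_zero]
      rw [Nat.mul_add, ih]
      ring
  have hsum := hsumgen q
  have hfin : q * (q + 1) ≤ 2 * (L.filter (fun e => (e ∩ A).Nonempty)).card := by omega
  have h1 : ((q : ℝ) * (q + 1)) / 2 ≤ ((L.filter (fun e => (e ∩ A).Nonempty)).card : ℝ) := by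
    rw [div_le_iff₀ (by norm_num : (0:ℝ) < 2)]
    calc ((q : ℝ) * (q + 1)) = ((q * (q + 1) : ℕ) : ℝ) := by push_cast; ring
      _ ≤ ((2 * (L.filter (fun e => (e ∩ A).Nonempty)).card : ℕ) : ℝ) := by exact_mod_cast hfin
      _ = ((L.filter (fun e => (e ∩ A).Nonempty)).card : ℝ) * 2 := by push_cast; ring
  refine ⟨h1, le_trans ?_ h1⟩
  have : (q : ℝ) ^ 2 ≤ (q : ℝ) * (q + 1) := by nlinarith [Nat.cast_nonneg (α := ℝ) q]
  linarith
end

section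
/- Let H = (V, L') be a hypergraph on a vertex set V of size q^2, where every hyperedge has size q, every vertex has degree at most 2α, and for every set A of q vertices at least αq/4 hyperedges intersect A. Then for every integer γ with 1 ≤ γ ≤ q/16 and every set B of 16γq vertices, the number of hyperedges L with |L ∩ B| ≥ γ is at least αq/8. -/
/-- If `H = (V, L')` is a hypergraph on `q²` vertices with all hyperedges of size `q`,
all vertex degrees at most `2α`, and every `q`-set of vertices meets at least `αq/4`
hyperedges, then for every `1 ≤ γ ≤ q/16` and every set `B` of `16γq` vertices,
at least `αq/8` hyperedges `L` satisfy `|L ∩ B| ≥ γ`. -/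
theorem stmt3 {V : Type} [Fintype V] [DecidableEq V] (q : ℕ) (α : ℝ) (hα : 0 < α)
    (L' : Finset (Finset V))
    (hV : Fintype.card V = q ^ 2)
    (hsize : ∀ e ∈ L', e.card = q)
    (hdeg : ∀ v : V, ((L'.filter (fun e => v ∈ e)).card : ℝ) ≤ 2 * α)
    (hA : ∀ A : Finset V, A.card = q →
      α * q / 4 ≤ ((L'.filter (fun e => (e ∩ A).Nonempty)).card : ℝ)) :
    ∀ γ : ℕ, 1 ≤ γ → (γ : ℝ) ≤ (q : ℝ) / 16 →
      ∀ B : Finset V, B.card = 16 * γ * q →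
        α * q / 8 ≤ ((L'.filter (fun e => γ ≤ (e ∩ B).card)).card : ℝ) := by
  classical
  intro γ hγ hγq B hB
  have hq16 : 16 ≤ q := by
    have h1 : (1:ℝ) ≤ (γ:ℝ) := by exact_mod_cast hγ
    have h2 : (16:ℝ) ≤ (q:ℝ) := by linarith
    exact_mod_cast h2
  have hq0 : 0 < q := by omega
  have hVne : Nonempty V := by
    rw [← Fintype.card_pos_iff, hV]; positivity
  obtain ⟨v₀⟩ := hVne
  set m := 16 * γ with hm
  have hBcard : B.card = m * q := hB
  -- the enumeration of B
  set f : ℕ → V := fun n => if h : n < B.card then ((B.equivFin.symm ⟨n, h⟩ : B) : V) else v₀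
    with hf
  have hfB : ∀ n < B.card, f n ∈ B := by
    intro n hn
    simp only [hf, dif_pos hn]
    exact (B.equivFin.symm ⟨n, hn⟩).2
  have hfinj : ∀ a < B.card, ∀ b < B.card, f a = f b → a = b := by
    intro a ha b hb hab
    simp only [hf, dif_pos ha, dif_pos hb] at hab
    have h2 : (⟨a, ha⟩ : Fin B.card) = ⟨b, hb⟩ :=
      B.equivFin.symm.injective (Subtype.ext hab)
    exact congrArg Fin.val h2
  -- the blocks
  set A : ℕ → Finset V := fun i => (Finset.Ico (i*q) ((i+1)*q)).image f with hAdef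
  have hIco_sub : ∀ i < m, ∀ n ∈ Finset.Ico (i*q) ((i+1)*q), n < B.card := by
    intro i hi n hn
    rw [Finset.mem_Ico] at hn
    have : (i+1)*q ≤ m * q := Nat.mul_le_mul_right q hi
    omega
  have hAcard : ∀ i < m, (A i).card = q := by
    intro i hi
    rw [hAdef]
    rw [Finset.card_image_of_injOn, Nat.card_Ico]
    · ring_nf
      omega
    · intro a ha b hb hab
      exact hfinj a (hIco_sub i hi a ha) b (hIco_sub i hi b hb) hab
  have hAsub : ∀ i < m, A i ⊆ B := by
    intro i hi x hx
    rw [hAdef] at hx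
    simp only [Finset.mem_image] at hx
    obtain ⟨n, hn, rfl⟩ := hx
    exact hfB n (hIco_sub i hi n hn)
  have hAdisj : ∀ i < m, ∀ j < m, i ≠ j → ∀ x, x ∈ A i → x ∈ A j → False := by
    intro i hi j hj hij x hxi hxj
    simp only [hAdef, Finset.mem_image] at hxi hxj
    obtain ⟨a, ha, hax⟩ := hxi
    obtain ⟨b, hb, hbx⟩ := hxj
    have hab : a = b := hfinj a (hIco_sub i hi a ha) b (hIco_sub j hj b hb) (hax.trans hbx.symm)
    rw [Finset.mem_Ico] at ha hb
    subst hab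
    rcases lt_or_gt_of_ne hij with h | h
    · have : (i+1)*q ≤ j * q := Nat.mul_le_mul_right q h
      omega
    · have : (j+1)*q ≤ i * q := Nat.mul_le_mul_right q h
      omega
  -- double counting
  have hswap : ∑ i ∈ Finset.range m, (L'.filter (fun e => (e ∩ A i).Nonempty)).card
      = ∑ e ∈ L', ((Finset.range m).filter (fun i => (e ∩ A i).Nonempty)).card := by
    simp only [Finset.card_filter]
    exact Finset.sum_comm
  -- per-edge bound: number of blocks met is at most |e ∩ B|
  have hedge : ∀ e, ((Finset.range m).filter (fun i => (e ∩ A i).Nonempty)).card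
      ≤ (e ∩ B).card := by
    intro e
    apply Finset.card_le_card_of_injOn (fun i => if h : (e ∩ A i).Nonempty then h.choose else v₀)
    · intro i hi
      simp only [Finset.mem_coe, Finset.mem_filter, Finset.mem_range] at hi
      simp only [dif_pos hi.2, Finset.mem_coe]
      have hc := hi.2.choose_spec
      rw [Finset.mem_inter] at hc ⊢
      exact ⟨hc.1, hAsub i hi.1 hc.2⟩
    · intro i hi j hj hij
      simp only [Finset.coe_filter, Set.mem_setOf_eq, Finset.mem_range] at hi hj
      simp only [dif_pos hi.2, dif_pos hj.2] at hij
      by_contra hne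
      have hci := hi.2.choose_spec
      have hcj := hj.2.choose_spec
      rw [Finset.mem_inter] at hci hcj
      exact hAdisj i hi.1 j hj.1 hne _ hci.2 (hij ▸ hcj.2)
  have hedgem : ∀ e, ((Finset.range m).filter (fun i => (e ∩ A i).Nonempty)).card ≤ m := by
    intro e
    calc ((Finset.range m).filter (fun i => (e ∩ A i).Nonempty)).card
        ≤ (Finset.range m).card := Finset.card_filter_le _ _
      _ = m := Finset.card_range m
  -- bound on |L'|
  have hL' : (L'.card : ℝ) ≤ 2 * α * q := by
    have h1 : ∑ e ∈ L', e.card = ∑ v : V, (L'.filter (fun e => v ∈ e)).card := by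
      simp only [Finset.card_filter]
      rw [Finset.sum_comm]
      apply Finset.sum_congr rfl
      intro e _
      simp [Finset.sum_ite_mem, Finset.univ_inter]
    have h2 : ∑ e ∈ L', e.card = L'.card * q := by
      rw [Finset.sum_congr rfl hsize, Finset.sum_const, smul_eq_mul]
    have h3 : ((∑ v : V, (L'.filter (fun e => v ∈ e)).card : ℕ) : ℝ)
        ≤ (q:ℝ)^2 * (2 * α) := by
      push_cast
      calc ∑ v : V, ((L'.filter (fun e => v ∈ e)).card : ℝ)
          ≤ ∑ _v : V, (2 * α) := Finset.sum_le_sum (fun v _ => hdeg v)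
        _ = (Fintype.card V : ℝ) * (2 * α) := by rw [Finset.sum_const, Finset.card_univ]; ring
        _ = (q:ℝ)^2 * (2 * α) := by rw [hV]; push_cast; ring
    rw [← h1, h2] at h3
    push_cast at h3
    have hq : (0:ℝ) < q := by exact_mod_cast hq0
    nlinarith
  -- lower bound on the double count
  set N := (L'.filter (fun e => γ ≤ (e ∩ B).card)).card with hN
  have hlow : (m : ℝ) * (α * q / 4)
      ≤ ((∑ i ∈ Finset.range m, (L'.filter (fun e => (e ∩ A i).Nonempty)).card : ℕ) : ℝ) := by
    push_cast
    calc (m : ℝ) * (α * q / 4) = ∑ _i ∈ Finset.range m, (α * q / 4) := by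
          rw [Finset.sum_const, Finset.card_range, nsmul_eq_mul]
      _ ≤ ∑ i ∈ Finset.range m, ((L'.filter (fun e => (e ∩ A i).Nonempty)).card : ℝ) := by
          apply Finset.sum_le_sum
          intro i hi
          exact hA (A i) (hAcard i (Finset.mem_range.mp hi))
  -- upper bound on the double count
  have hup : ∑ e ∈ L', ((Finset.range m).filter (fun i => (e ∩ A i).Nonempty)).card
      ≤ m * N + (γ - 1) * L'.card := by
    calc ∑ e ∈ L', ((Finset.range m).filter (fun i => (e ∩ A i).Nonempty)).card
        ≤ ∑ e ∈ L', (if γ ≤ (e ∩ B).card then m else (γ - 1)) := by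
          apply Finset.sum_le_sum
          intro e _
          by_cases h : γ ≤ (e ∩ B).card
          · rw [if_pos h]; exact hedgem e
          · rw [if_neg h]
            have := hedge e
            omega
      _ = m * N + (γ - 1) * (L'.filter (fun e => ¬ γ ≤ (e ∩ B).card)).card := by
          rw [Finset.sum_ite, Finset.sum_const, Finset.sum_const, smul_eq_mul, smul_eq_mul]
          rw [hN]
          ring_nf
      _ ≤ m * N + (γ - 1) * L'.card := by
          have : (L'.filter (fun e => ¬ γ ≤ (e ∩ B).card)).card ≤ L'.card :=
            Finset.card_filter_le _ _
          exact Nat.add_le_add_left (Nat.mul_le_mul_left _ this) _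
  -- combine
  have hcomb : (m : ℝ) * (α * q / 4) ≤ (m : ℝ) * N + ((γ : ℝ) - 1) * L'.card := by
    have h1 := hlow
    rw [hswap] at h1
    have h2 : ((∑ e ∈ L', ((Finset.range m).filter (fun i => (e ∩ A i).Nonempty)).card : ℕ) : ℝ)
        ≤ (m : ℝ) * N + ((γ : ℝ) - 1) * L'.card := by
      have := hup
      have hcast : (((m * N + (γ - 1) * L'.card : ℕ)) : ℝ)
          = (m : ℝ) * N + ((γ : ℝ) - 1) * L'.card := by
        push_cast [Nat.cast_sub hγ]
        ring
      calc ((∑ e ∈ L', ((Finset.range m).filter (fun i => (e ∩ A i).Nonempty)).card : ℕ) : ℝ)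
          ≤ (((m * N + (γ - 1) * L'.card : ℕ)) : ℝ) := by exact_mod_cast this
        _ = _ := hcast
    linarith
  have hγR : (1:ℝ) ≤ (γ:ℝ) := by exact_mod_cast hγ
  have hqR : (0:ℝ) < q := by exact_mod_cast hq0
  have hmR : (m : ℝ) = 16 * γ := by rw [hm]; push_cast; ring
  have hL'pos : ((γ:ℝ) - 1) * L'.card ≤ ((γ:ℝ) - 1) * (2 * α * q) := by
    apply mul_le_mul_of_nonneg_left hL' (by linarith)
  rw [hmR] at hcomb
  nlinarith [mul_pos hα hqR]
end

section
/- Let G be a graph constructed as follows: V(G) = V, and there is a linear hypergraph (V, L') (any two vertices lie in at most one hyperedge) such that for each hyperedge L ∈ L', G[L] is a complete s-partite graph, and every edge of G lies inside some hyperedge. Suppose additionally every vertex of the hypergraph has degree at most 2α and each hyperedge has at most q vertices. Then every edge xy of G lies in at most 4α²·(4α² + 2α)^{s−2} copies of K_{s+1}. -/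
/-- Let `G` be a graph whose edges all lie inside hyperedges of a linear hypergraph
`L'` in which every vertex has degree at most `2α` and every hyperedge has at most
`q` vertices, and such that `G` restricted to each hyperedge is complete `s`-partite.
Then every edge of `G` lies in at most `4α²·(4α² + 2α)^{s−2}` copies of `K_{s+1}`. -/
theorem stmt5 {V : Type} [Fintype V] [DecidableEq V] (s q : ℕ) (hs : 3 ≤ s)
    (α : ℝ) (hα : 1 ≤ α)
    (G : SimpleGraph V) (L' : Finset (Finset V))
    (hlinear : ∀ u v : V, u ≠ v → (L'.filter (fun e => u ∈ e ∧ v ∈ e)).card ≤ 1)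
    (hpartite : ∀ L ∈ L', ∃ χ : V → Fin s, ∀ x ∈ L, ∀ y ∈ L, (G.Adj x y ↔ χ x ≠ χ y))
    (hedge : ∀ x y : V, G.Adj x y → ∃ L ∈ L', x ∈ L ∧ y ∈ L)
    (hdeg : ∀ v : V, ((L'.filter (fun e => v ∈ e)).card : ℝ) ≤ 2 * α)
    (hsize : ∀ e ∈ L', e.card ≤ q) :
    ∀ x y : V, G.Adj x y →
      (({T : Finset V | G.IsNClique (s + 1) T ∧ x ∈ T ∧ y ∈ T}.ncard : ℝ))
        ≤ 4 * α ^ 2 * (4 * α ^ 2 + 2 * α) ^ (s - 2) := by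
  classical
  intro x y hxy
  obtain ⟨L, hL, hxL, hyL⟩ := hedge x y hxy
  have hxy' : x ≠ y := hxy.ne
  letI : LinearOrder V := LinearOrder.lift' (Fintype.equivFin V) (Fintype.equivFin V).injective
  -- two distinct hyperedges share at most one vertex
  have hshare : ∀ e₁ ∈ L', ∀ e₂ ∈ L', e₁ ≠ e₂ → ∀ u v : V,
      u ∈ e₁ → u ∈ e₂ → v ∈ e₁ → v ∈ e₂ → u = v := by
    intro e₁ h₁ e₂ h₂ hne u v hu1 hu2 hv1 hv2
    by_contra huv
    have hcard := hlinear u v huv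
    have h2 : ({e₁, e₂} : Finset (Finset V)) ⊆ L'.filter (fun e => u ∈ e ∧ v ∈ e) := by
      intro e he
      simp only [Finset.mem_insert, Finset.mem_singleton] at he
      rcases he with rfl | rfl <;> simp [Finset.mem_filter, *]
    have := Finset.card_le_card h2
    rw [Finset.card_pair hne] at this
    omega
  -- `L` is the unique hyperedge containing both `x` and `y`
  have hLuniq : ∀ e ∈ L', x ∈ e → y ∈ e → e = L := by
    intro e he hxe hye
    by_contra hne
    have hcard := hlinear x y hxy'
    have h2 : ({e, L} : Finset (Finset V)) ⊆ L'.filter (fun f => x ∈ f ∧ y ∈ f) := by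
      intro f hf
      simp only [Finset.mem_insert, Finset.mem_singleton] at hf
      rcases hf with rfl | rfl <;> simp [Finset.mem_filter, *]
    have := Finset.card_le_card h2
    rw [Finset.card_pair hne] at this
    omega
  set E : V → Finset (Finset V) := fun v => L'.filter (fun e => v ∈ e) with hE
  set Cand : Finset V := Finset.univ.filter (fun v => v ∉ L ∧
      (∃ e ∈ L', x ∈ e ∧ v ∈ e) ∧ (∃ e ∈ L', y ∈ e ∧ v ∈ e)) with hCand
  have hmemCand : ∀ v : V, v ∈ Cand ↔ v ∉ L ∧
      (∃ e ∈ L', x ∈ e ∧ v ∈ e) ∧ (∃ e ∈ L', y ∈ e ∧ v ∈ e) := by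
    intro v; simp [hCand]
  set Sv : V → Finset V := fun v =>
    Cand ∪ L.filter (fun w => ∃ e ∈ L', v ∈ e ∧ w ∈ e) with hSv
  have hα0 : (0:ℝ) ≤ α := le_trans zero_le_one hα
  -- bound on the number of candidates
  have hCandcard : (Cand.card : ℝ) ≤ 4 * α ^ 2 := by
    have key : Cand.card ≤ ((E x) ×ˢ (E y)).card := by
      apply Finset.card_le_card_of_injOn (fun v =>
        if h : v ∈ Cand then
          (((hmemCand v).1 h).2.1.choose, ((hmemCand v).1 h).2.2.choose)
        else (L, L))
      · intro v hv
        simp only [Finset.mem_coe] at hv ⊢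
        rw [dif_pos hv]
        have h1 := ((hmemCand v).1 hv).2.1.choose_spec
        have h2 := ((hmemCand v).1 hv).2.2.choose_spec
        simp only [Finset.mem_product, hE, Finset.mem_filter]
        exact ⟨⟨h1.1, h1.2.1⟩, h2.1, h2.2.1⟩
      · intro v hv v' hv' heq
        simp only [Finset.mem_coe] at hv hv'
        dsimp only at heq
        rw [dif_pos hv, dif_pos hv'] at heq
        have h1 := ((hmemCand v).1 hv).2.1.choose_spec
        have h2 := ((hmemCand v).1 hv).2.2.choose_spec
        have h1' := ((hmemCand v').1 hv').2.1.choose_spec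
        have h2' := ((hmemCand v').1 hv').2.2.choose_spec
        have e1eq : ((hmemCand v).1 hv).2.1.choose = ((hmemCand v').1 hv').2.1.choose :=
          congrArg Prod.fst heq
        have e2eq : ((hmemCand v).1 hv).2.2.choose = ((hmemCand v').1 hv').2.2.choose :=
          congrArg Prod.snd heq
        set e₁ := ((hmemCand v).1 hv).2.1.choose
        set e₂ := ((hmemCand v).1 hv).2.2.choose
        have hne : e₁ ≠ e₂ := by
          intro h
          have : e₁ = L := hLuniq e₁ h1.1 h1.2.1 (by rw [h]; exact h2.2.1)
          exact ((hmemCand v).1 hv).1 (this ▸ h1.2.2)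
        exact hshare e₁ h1.1 e₂ h2.1 hne v v' h1.2.2 h2.2.2
          (e1eq ▸ h1'.2.2) (e2eq ▸ h2'.2.2)
    calc (Cand.card : ℝ) ≤ ((E x).card * (E y).card : ℕ) := by
          exact_mod_cast key.trans_eq (Finset.card_product _ _)
      _ ≤ (2 * α) * (2 * α) := by
          push_cast
          exact mul_le_mul (hdeg x) (hdeg y) (Nat.cast_nonneg _)
            (by linarith)
      _ = 4 * α ^ 2 := by ring
  -- bound on the size of `Sv v` for `v ∉ L`
  have hSvcard : ∀ v : V, v ∉ L → ((Sv v).card : ℝ) ≤ 4 * α ^ 2 + 2 * α := by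
    intro v hvL
    have h1 : (L.filter (fun w => ∃ e ∈ L', v ∈ e ∧ w ∈ e)).card ≤ (E v).card := by
      apply Finset.card_le_card_of_injOn (fun w =>
        if h : w ∈ L.filter (fun w => ∃ e ∈ L', v ∈ e ∧ w ∈ e) then
          ((Finset.mem_filter.1 h).2).choose
        else L)
      · intro w hw
        simp only [Finset.mem_coe] at hw ⊢
        rw [dif_pos hw]
        have hsp := ((Finset.mem_filter.1 hw).2).choose_spec
        simp only [hE, Finset.mem_filter]
        exact ⟨hsp.1, hsp.2.1⟩
      · intro w hw w' hw' heq
        simp only [Finset.mem_coe] at hw hw'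
        dsimp only at heq
        rw [dif_pos hw, dif_pos hw'] at heq
        have hsp := ((Finset.mem_filter.1 hw).2).choose_spec
        have hsp' := ((Finset.mem_filter.1 hw').2).choose_spec
        set e := ((Finset.mem_filter.1 hw).2).choose
        have hneL : e ≠ L := fun h => hvL (h ▸ hsp.2.1)
        exact hshare e hsp.1 L hL hneL w w' hsp.2.2 (Finset.mem_filter.1 hw).1
          (heq ▸ hsp'.2.2) (Finset.mem_filter.1 hw').1
    have h2 : (Sv v).card ≤ Cand.card + (L.filter (fun w => ∃ e ∈ L', v ∈ e ∧ w ∈ e)).card :=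
      Finset.card_union_le _ _
    have h3 : ((L.filter (fun w => ∃ e ∈ L', v ∈ e ∧ w ∈ e)).card : ℝ) ≤ 2 * α :=
      le_trans (by exact_mod_cast h1) (hdeg v)
    calc ((Sv v).card : ℝ) ≤ (Cand.card : ℝ) +
          ((L.filter (fun w => ∃ e ∈ L', v ∈ e ∧ w ∈ e)).card : ℝ) := by
          exact_mod_cast h2
      _ ≤ 4 * α ^ 2 + 2 * α := add_le_add hCandcard h3
  -- every clique containing x, y has a vertex outside L
  have hout : ∀ T : Finset V, G.IsNClique (s+1) T → x ∈ T → y ∈ T → (T \ L).Nonempty := by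
    intro T hT hxT hyT
    rw [Finset.sdiff_nonempty]
    intro hTL
    obtain ⟨χ, hχ⟩ := hpartite L hL
    have hinj : Set.InjOn χ ↑T := by
      intro a ha b hb hab
      by_contra hne
      have hadj : G.Adj a b := hT.1 ha hb hne
      exact ((hχ a (hTL ha) b (hTL hb)).1 hadj) hab
    have := Finset.card_le_card_of_injOn χ (fun a _ => Finset.mem_univ (χ a)) hinj
    simp only [Finset.card_univ, Fintype.card_fin, hT.2] at this
    omega
  -- the chosen outside vertex
  set vT : Finset V → V := fun T => if h : (T \ L).Nonempty then (T \ L).min' h else x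
    with hvT
  set rT : Finset V → Finset V := fun T => T \ {x, y, vT T} with hrT
  set fT : Finset V → (Fin (s-2) → V) := fun T i =>
    if h : (rT T).card = s - 2 then ((rT T).orderIsoOfFin h i : V) else x with hfT
  -- facts about cliques containing x and y
  have hfacts : ∀ T : Finset V, G.IsNClique (s+1) T → x ∈ T → y ∈ T →
      vT T ∈ Cand ∧ vT T ∈ T ∧ vT T ∉ L ∧ (rT T).card = s - 2 ∧
      ∀ w ∈ rT T, w ∈ Sv (vT T) := by
    intro T hT hxT hyT
    have hne := hout T hT hxT hyT
    have hvmem : vT T ∈ T \ L := by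
      rw [hvT]; simp only [dif_pos hne]; exact (T \ L).min'_mem hne
    obtain ⟨hvT', hvL⟩ := Finset.mem_sdiff.1 hvmem
    have hvx : vT T ≠ x := fun h => hvL (h ▸ hxL)
    have hvy : vT T ≠ y := fun h => hvL (h ▸ hyL)
    have hadjx : G.Adj (vT T) x := hT.1 hvT' hxT hvx
    have hadjy : G.Adj (vT T) y := hT.1 hvT' hyT hvy
    have hvCand : vT T ∈ Cand := by
      rw [hmemCand]
      obtain ⟨e1, he1, hv1, hx1⟩ := hedge _ _ hadjx
      obtain ⟨e2, he2, hv2, hy2⟩ := hedge _ _ hadjy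
      exact ⟨hvL, ⟨e1, he1, hx1, hv1⟩, ⟨e2, he2, hy2, hv2⟩⟩
    have hsub : ({x, y, vT T} : Finset V) ⊆ T := by
      intro a ha
      simp only [Finset.mem_insert, Finset.mem_singleton] at ha
      rcases ha with rfl | rfl | rfl <;> assumption
    have hcard3 : ({x, y, vT T} : Finset V).card = 3 := by
      rw [Finset.card_insert_of_notMem, Finset.card_insert_of_notMem,
        Finset.card_singleton]
      · simp [Ne.symm hvy]
      · simp [hxy', Ne.symm hvx]
    have hrcard : (rT T).card = s - 2 := by
      rw [hrT]
      simp only [Finset.card_sdiff_of_subset hsub, hT.2, hcard3]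
      omega
    refine ⟨hvCand, hvT', hvL, hrcard, ?_⟩
    intro w hw
    rw [hrT] at hw
    obtain ⟨hwT, hwn⟩ := Finset.mem_sdiff.1 hw
    simp only [Finset.mem_insert, Finset.mem_singleton, not_or] at hwn
    obtain ⟨hwx, hwy, hwv⟩ := hwn
    have hadjwv : G.Adj (vT T) w := hT.1 hvT' hwT (Ne.symm hwv)
    by_cases hwL : w ∈ L
    · rw [hSv]
      apply Finset.mem_union_right
      rw [Finset.mem_filter]
      obtain ⟨e, he, hv, hw'⟩ := hedge _ _ hadjwv
      exact ⟨hwL, e, he, hv, hw'⟩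
    · apply Finset.mem_union_left
      rw [hmemCand]
      have hadjwx : G.Adj w x := hT.1 hwT hxT hwx
      have hadjwy : G.Adj w y := hT.1 hwT hyT hwy
      obtain ⟨e1, he1, hw1, hx1⟩ := hedge _ _ hadjwx
      obtain ⟨e2, he2, hw2, hy2⟩ := hedge _ _ hadjwy
      exact ⟨hwL, ⟨e1, he1, hx1, hw1⟩, ⟨e2, he2, hy2, hw2⟩⟩
  -- realize the set of cliques as a Finset
  set 𝒯 : Finset (Finset V) :=
    Finset.univ.filter (fun T => G.IsNClique (s+1) T ∧ x ∈ T ∧ y ∈ T) with h𝒯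
  have hset : {T : Finset V | G.IsNClique (s + 1) T ∧ x ∈ T ∧ y ∈ T} = ↑𝒯 := by
    ext T; simp [h𝒯]
  rw [hset, Set.ncard_coe_finset]
  set B := Cand.sigma (fun v => Fintype.piFinset (fun _ : Fin (s-2) => Sv v)) with hB
  have hcount : 𝒯.card ≤ B.card := by
    apply Finset.card_le_card_of_injOn
      (fun T => (⟨vT T, fT T⟩ : Σ _ : V, Fin (s-2) → V))
    · intro T hT
      simp only [Finset.mem_coe] at hT ⊢
      rw [h𝒯, Finset.mem_filter] at hT
      obtain ⟨hvC, hvTm, hvL, hrcard, hmem⟩ := hfacts T hT.2.1 hT.2.2.1 hT.2.2.2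
      rw [hB, Finset.mem_sigma]
      refine ⟨hvC, ?_⟩
      rw [Fintype.mem_piFinset]
      intro i
      rw [hfT]
      simp only [dif_pos hrcard]
      exact hmem _ (((rT T).orderIsoOfFin hrcard i).2)
    · intro T hT T' hT' heq
      simp only [Finset.mem_coe, h𝒯, Finset.mem_filter] at hT hT'
      obtain ⟨hvC, hvTm, hvL, hrcard, _⟩ := hfacts T hT.2.1 hT.2.2.1 hT.2.2.2
      obtain ⟨hvC', hvTm', hvL', hrcard', _⟩ := hfacts T' hT'.2.1 hT'.2.2.1 hT'.2.2.2
      have hv_eq : vT T = vT T' := congrArg Sigma.fst heq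
      have hf_eq : fT T = fT T' := by
        have := (Sigma.mk.inj_iff.1 heq).2
        exact eq_of_heq this
      have himage : ∀ (S : Finset V), G.IsNClique (s+1) S → x ∈ S → y ∈ S →
          (rS : (rT S).card = s - 2) →
          rT S = Finset.image (fT S) Finset.univ := by
        intro S _ _ _ rS
        ext w
        simp only [Finset.mem_image, Finset.mem_univ, true_and]
        constructor
        · intro hw
          refine ⟨((rT S).orderIsoOfFin rS).symm ⟨w, hw⟩, ?_⟩
          rw [hfT]
          simp only [dif_pos rS, OrderIso.apply_symm_apply]
        · rintro ⟨i, rfl⟩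
          rw [hfT]
          simp only [dif_pos rS]
          exact (((rT S).orderIsoOfFin rS i)).2
      have hr_eq : rT T = rT T' := by
        rw [himage T hT.2.1 hT.2.2.1 hT.2.2.2 hrcard,
          himage T' hT'.2.1 hT'.2.2.1 hT'.2.2.2 hrcard', hf_eq]
      have hsubT : ({x, y, vT T} : Finset V) ⊆ T := by
        intro a ha
        simp only [Finset.mem_insert, Finset.mem_singleton] at ha
        rcases ha with rfl | rfl | rfl
        · exact hT.2.2.1
        · exact hT.2.2.2
        · exact hvTm
      have hsubT' : ({x, y, vT T'} : Finset V) ⊆ T' := by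
        intro a ha
        simp only [Finset.mem_insert, Finset.mem_singleton] at ha
        rcases ha with rfl | rfl | rfl
        · exact hT'.2.2.1
        · exact hT'.2.2.2
        · exact hvTm'
      calc T = rT T ∪ {x, y, vT T} := by rw [hrT]; exact (Finset.sdiff_union_of_subset hsubT).symm
        _ = rT T' ∪ {x, y, vT T'} := by rw [hr_eq, hv_eq]
        _ = T' := Finset.sdiff_union_of_subset hsubT'
  have hBcard : B.card = ∑ v ∈ Cand, (Sv v).card ^ (s - 2) := by
    rw [hB, Finset.card_sigma]
    congr 1
    ext v
    rw [Fintype.card_piFinset]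
    simp [Finset.prod_const]
  -- final real arithmetic
  have hbase : (0:ℝ) ≤ 4 * α ^ 2 + 2 * α := by nlinarith
  calc (𝒯.card : ℝ) ≤ (B.card : ℝ) := by exact_mod_cast hcount
    _ = ∑ v ∈ Cand, ((Sv v).card : ℝ) ^ (s - 2) := by
        rw [hBcard]; push_cast; ring_nf
    _ ≤ ∑ v ∈ Cand, (4 * α ^ 2 + 2 * α) ^ (s - 2) := by
        apply Finset.sum_le_sum
        intro v hv
        have hvL : v ∉ L := ((hmemCand v).1 hv).1
        exact pow_le_pow_left₀ (Nat.cast_nonneg _) (hSvcard v hvL) _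
    _ = (Cand.card : ℝ) * (4 * α ^ 2 + 2 * α) ^ (s - 2) := by
        rw [Finset.sum_const, nsmul_eq_mul]
    _ ≤ 4 * α ^ 2 * (4 * α ^ 2 + 2 * α) ^ (s - 2) :=
        mul_le_mul_of_nonneg_right hCandcard (pow_nonneg hbase _)
end

section
/- Let (V, L') be a linear hypergraph (any two points lie in at most one line), and let G be a graph on V such that every edge of G lies within some line of L', and for every line L, the induced graph G[L] contains no K_{s+1}, where s ≥ 4. Then every copy of K_{s+2} in G contains 4 vertices in general position, i.e., 4 vertices no 3 of which lie on a common line. -/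
/-- If every edge of `G` lies inside a line of a linear hypergraph `L'` and `G`
restricted to each line is `K_{s+1}`-free (`s ≥ 4`), then every copy of `K_{s+2}`
in `G` contains 4 vertices in general position (no 3 on a common line). -/
theorem stmt6 {V : Type} [DecidableEq V] (s : ℕ) (hs : 4 ≤ s)
    (G : SimpleGraph V) (L' : Finset (Finset V))
    (hlinear : ∀ u v : V, u ≠ v → (L'.filter (fun e => u ∈ e ∧ v ∈ e)).card ≤ 1)
    (hedge : ∀ x y : V, G.Adj x y → ∃ L ∈ L', x ∈ L ∧ y ∈ L)
    (hLfree : ∀ L ∈ L', ∀ T : Finset V, T ⊆ L → ¬ G.IsNClique (s + 1) T) :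
    ∀ K : Finset V, G.IsNClique (s + 2) K →
      ∃ v₁ ∈ K, ∃ v₂ ∈ K, ∃ v₃ ∈ K, ∃ v₄ ∈ K,
        ({v₁, v₂, v₃, v₄} : Finset V).card = 4 ∧
        ∀ L ∈ L', (({v₁, v₂, v₃, v₄} : Finset V) ∩ L).card ≤ 2 := by
  -- uniqueness of lines through two distinct points
  have huniq : ∀ {L M : Finset V}, L ∈ L' → M ∈ L' → ∀ {u v : V}, u ≠ v →
      u ∈ L → v ∈ L → u ∈ M → v ∈ M → L = M := by
    intro L M hL hM u v huv huL hvL huM hvM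
    have h1 := hlinear u v huv
    rw [Finset.card_le_one] at h1
    exact h1 L (Finset.mem_filter.2 ⟨hL, huL, hvL⟩) M (Finset.mem_filter.2 ⟨hM, huM, hvM⟩)
  intro K hK
  -- every line meets K in at most s points
  have hmeet : ∀ L ∈ L', (K ∩ L).card ≤ s := by
    intro L hL
    by_contra h
    push_neg at h
    obtain ⟨T, hTsub, hTcard⟩ := Finset.exists_subset_card_eq (show s + 1 ≤ (K ∩ L).card from h)
    exact hLfree L hL T (hTsub.trans Finset.inter_subset_right)
      ⟨hK.1.subset (fun t ht => Finset.inter_subset_left (hTsub ht)), hTcard⟩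
  by_cases hcase : ∃ L ∈ L', 3 ≤ (K ∩ L).card
  · obtain ⟨L, hL, hL3⟩ := hcase
    -- two points of K outside L
    have hKL : (K \ L).card + (K ∩ L).card = K.card := Finset.card_sdiff_add_card_inter K L
    have h2 : 2 ≤ (K \ L).card := by
      have h5 := hmeet L hL
      have h6 := hK.card_eq
      omega
    obtain ⟨a, ha, b, hb, hab⟩ := Finset.one_lt_card.1 (show 1 < (K \ L).card by omega)
    have haK : a ∈ K := (Finset.mem_sdiff.1 ha).1
    have hbK : b ∈ K := (Finset.mem_sdiff.1 hb).1
    have haL : a ∉ L := (Finset.mem_sdiff.1 ha).2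
    have hbL : b ∉ L := (Finset.mem_sdiff.1 hb).2
    -- the line through a and b
    obtain ⟨M, hM, haM, hbM⟩ := hedge a b (hK.1 haK hbK hab)
    have hML : M ≠ L := fun h => haL (h ▸ haM)
    -- L and M share at most one point
    have hLM1 : (L ∩ M).card ≤ 1 := by
      rw [Finset.card_le_one]
      intro p hp q hq
      by_contra hpq
      exact hML (huniq hM hL hpq (Finset.mem_inter.1 hp).2 (Finset.mem_inter.1 hq).2
        (Finset.mem_inter.1 hp).1 (Finset.mem_inter.1 hq).1)
    -- two points of K ∩ L outside M
    have hsub : (K ∩ L) ∩ M ⊆ L ∩ M := by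
      intro p hp
      simp only [Finset.mem_inter] at hp ⊢
      exact ⟨hp.1.2, hp.2⟩
    have hKLM : ((K ∩ L) ∩ M).card ≤ 1 := le_trans (Finset.card_le_card hsub) hLM1
    have hKLsd : ((K ∩ L) \ M).card + ((K ∩ L) ∩ M).card = (K ∩ L).card :=
      Finset.card_sdiff_add_card_inter _ _
    obtain ⟨x, hx, y, hy, hxy⟩ := Finset.one_lt_card.1 (show 1 < ((K ∩ L) \ M).card by omega)
    have hxK : x ∈ K := (Finset.mem_inter.1 (Finset.mem_sdiff.1 hx).1).1
    have hxL : x ∈ L := (Finset.mem_inter.1 (Finset.mem_sdiff.1 hx).1).2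
    have hxM : x ∉ M := (Finset.mem_sdiff.1 hx).2
    have hyK : y ∈ K := (Finset.mem_inter.1 (Finset.mem_sdiff.1 hy).1).1
    have hyL : y ∈ L := (Finset.mem_inter.1 (Finset.mem_sdiff.1 hy).1).2
    have hyM : y ∉ M := (Finset.mem_sdiff.1 hy).2
    have hxa : x ≠ a := fun h => haL (h ▸ hxL)
    have hxb : x ≠ b := fun h => hbL (h ▸ hxL)
    have hya : y ≠ a := fun h => haL (h ▸ hyL)
    have hyb : y ≠ b := fun h => hbL (h ▸ hyL)
    refine ⟨x, hxK, y, hyK, a, haK, b, hbK, ?_, ?_⟩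
    · rw [Finset.card_insert_of_notMem (by simp [hxy, hxa, hxb]),
        Finset.card_insert_of_notMem (by simp [hya, hyb]),
        Finset.card_insert_of_notMem (by simp [hab]), Finset.card_singleton]
    · intro N hN
      by_contra hc
      push_neg at hc
      have h3 : 3 ≤ (({x, y, a, b} : Finset V) ∩ N).card := hc
      by_cases hxyN : x ∈ N ∧ y ∈ N
      · have hNL : N = L := huniq hN hL hxy hxyN.1 hxyN.2 hxL hyL
        have : ({x, y, a, b} : Finset V) ∩ N ⊆ {x, y} := by
          intro p hp
          simp only [Finset.mem_inter, Finset.mem_insert, Finset.mem_singleton] at hp ⊢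
          rcases hp.1 with h | h | h | h
          · exact Or.inl h
          · exact Or.inr h
          · exact absurd (h ▸ hp.2) (hNL ▸ haL)
          · exact absurd (h ▸ hp.2) (hNL ▸ hbL)
        have h7 := Finset.card_le_card this
        have h8 : ({x, y} : Finset V).card ≤ 2 := Finset.card_le_two
        omega
      · -- one of x, y not in N; then a, b ∈ N, so N = M
        have habN : a ∈ N ∧ b ∈ N := by
          rcases not_and_or.1 hxyN with h | h
          · have hsub' : ({x, y, a, b} : Finset V) ∩ N ⊆ {y, a, b} := by
              intro p hp
              simp only [Finset.mem_inter, Finset.mem_insert, Finset.mem_singleton] at hp ⊢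
              rcases hp.1 with hh | hh | hh | hh
              · exact absurd (hh ▸ hp.2) h
              · exact Or.inl hh
              · exact Or.inr (Or.inl hh)
              · exact Or.inr (Or.inr hh)
            have heq : ({x, y, a, b} : Finset V) ∩ N = {y, a, b} := by
              apply Finset.eq_of_subset_of_card_le hsub'
              calc ({y, a, b} : Finset V).card ≤ 3 := Finset.card_le_three
                _ ≤ _ := h3
            constructor
            · have ha' : a ∈ ({y, a, b} : Finset V) := by simp
              rw [← heq] at ha'
              exact (Finset.mem_inter.1 ha').2
            · have hb' : b ∈ ({y, a, b} : Finset V) := by simp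
              rw [← heq] at hb'
              exact (Finset.mem_inter.1 hb').2
          · have hsub' : ({x, y, a, b} : Finset V) ∩ N ⊆ {x, a, b} := by
              intro p hp
              simp only [Finset.mem_inter, Finset.mem_insert, Finset.mem_singleton] at hp ⊢
              rcases hp.1 with hh | hh | hh | hh
              · exact Or.inl hh
              · exact absurd (hh ▸ hp.2) h
              · exact Or.inr (Or.inl hh)
              · exact Or.inr (Or.inr hh)
            have heq : ({x, y, a, b} : Finset V) ∩ N = {x, a, b} := by
              apply Finset.eq_of_subset_of_card_le hsub'
              calc ({x, a, b} : Finset V).card ≤ 3 := Finset.card_le_three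
                _ ≤ _ := h3
            constructor
            · have ha' : a ∈ ({x, a, b} : Finset V) := by simp
              rw [← heq] at ha'
              exact (Finset.mem_inter.1 ha').2
            · have hb' : b ∈ ({x, a, b} : Finset V) := by simp
              rw [← heq] at hb'
              exact (Finset.mem_inter.1 hb').2
        have hNM : N = M := huniq hN hM hab habN.1 habN.2 haM hbM
        have : ({x, y, a, b} : Finset V) ∩ N ⊆ {a, b} := by
          intro p hp
          simp only [Finset.mem_inter, Finset.mem_insert, Finset.mem_singleton] at hp ⊢
          rcases hp.1 with h | h | h | h
          · exact absurd (h ▸ hp.2) (hNM ▸ hxM)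
          · exact absurd (h ▸ hp.2) (hNM ▸ hyM)
          · exact Or.inl h
          · exact Or.inr h
        have h7 := Finset.card_le_card this
        have h8 : ({a, b} : Finset V).card ≤ 2 := Finset.card_le_two
        omega
  · -- no line meets K in 3 or more points: any 4 points of K work
    push_neg at hcase
    obtain ⟨S, hSK, hS4⟩ := Finset.exists_subset_card_eq (show 4 ≤ K.card by rw [hK.2]; omega)
    obtain ⟨v, hv⟩ := Finset.card_pos.1 (show 0 < S.card by omega)
    have h3 : (S.erase v).card = 3 := by rw [Finset.card_erase_of_mem hv, hS4]
    obtain ⟨p, q, r, hpq, hpr, hqr, hE⟩ := Finset.card_eq_three.1 h3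
    have hSeq : S = {v, p, q, r} := by
      rw [← hE, Finset.insert_erase hv]
    have hvp : v ≠ p := fun h => (Finset.notMem_erase v S) (hE ▸ (h ▸ (by simp : p ∈ ({p,q,r}:Finset V))))
    have hvq : v ≠ q := fun h => (Finset.notMem_erase v S) (hE ▸ (h ▸ (by simp : q ∈ ({p,q,r}:Finset V))))
    have hvr : v ≠ r := fun h => (Finset.notMem_erase v S) (hE ▸ (h ▸ (by simp : r ∈ ({p,q,r}:Finset V))))
    refine ⟨v, hSK hv, p, hSK (hSeq ▸ (by simp)), q, hSK (hSeq ▸ (by simp)),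
      r, hSK (hSeq ▸ (by simp)), ?_, ?_⟩
    · rw [← hSeq, hS4]
    · intro N hN
      have : ({v, p, q, r} : Finset V) ∩ N ⊆ K ∩ N := by
        intro t ht
        simp only [Finset.mem_inter] at ht ⊢
        exact ⟨hSK (hSeq ▸ ht.1), ht.2⟩
      calc (({v, p, q, r} : Finset V) ∩ N).card ≤ (K ∩ N).card := Finset.card_le_card this
        _ ≤ 2 := by have := hcase N hN; omega
end

section
/- Let q be a sufficiently large prime and α = (log q)². Keep each line of the affine-plane-derived hypergraph (V, L) on q² vertices independently with probability α/q. Then with probability 1 − o(1), for every set A of q vertices, at least αq/4 of the retained lines intersect A. -/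
open MeasureTheory Finset
open scoped ENNReal

lemma aux_lines {n q : ℕ} (hq : 0 < q) (Lset : Finset (Finset (Fin n)))
    (hdeg : ∀ v : Fin n, (Lset.filter (fun e => v ∈ e)).card = q)
    (hlin : ∀ u v : Fin n, u ≠ v → (Lset.filter (fun e => u ∈ e ∧ v ∈ e)).card ≤ 1)
    (A : Finset (Fin n)) (hA : A.card = q) :
    q ^ 2 ≤ 2 * (Lset.filter (fun e => (e ∩ A).Nonempty)).card := by
  classical
  set S := Lset.filter (fun e => (e ∩ A).Nonempty) with hS
  -- first moment
  have key : ∀ e : Finset (Fin n), (e ∩ A).card = ∑ v ∈ A, if v ∈ e then 1 else 0 := by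
    intro e
    rw [Finset.inter_comm, ← Finset.filter_mem_eq_inter, Finset.card_filter]
  have sum1 : ∑ e ∈ Lset, (e ∩ A).card = q ^ 2 := by
    simp_rw [key]
    rw [Finset.sum_comm]
    have : ∀ v ∈ A, (∑ e ∈ Lset, if v ∈ e then 1 else 0) = q := by
      intro v _
      rw [← Finset.card_filter]
      exact hdeg v
    rw [Finset.sum_congr rfl this, Finset.sum_const, hA, smul_eq_mul, sq]
  -- second moment
  have offd : ∀ e : Finset (Fin n),
      (e ∩ A).offDiag = A.offDiag.filter (fun p => p.1 ∈ e ∧ p.2 ∈ e) := by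
    intro e
    ext ⟨u, v⟩
    simp only [Finset.mem_offDiag, Finset.mem_inter, Finset.mem_filter]
    tauto
  have sum2 : ∑ e ∈ Lset, (e ∩ A).card ^ 2 ≤ 2 * q ^ 2 := by
    have hsq : ∀ e : Finset (Fin n),
        (e ∩ A).card ^ 2 = (e ∩ A).offDiag.card + (e ∩ A).card := by
      intro e
      rw [Finset.offDiag_card, sq]
      rcases Nat.eq_zero_or_pos (e ∩ A).card with h0 | h0
      · rw [h0]; simp
      · have := Nat.le_mul_of_pos_left (e ∩ A).card h0
        omega
    simp_rw [hsq]
    rw [Finset.sum_add_distrib, sum1]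
    have hoff : ∑ e ∈ Lset, (e ∩ A).offDiag.card ≤ q ^ 2 := by
      calc ∑ e ∈ Lset, (e ∩ A).offDiag.card
          = ∑ e ∈ Lset, ∑ p ∈ A.offDiag, (if p.1 ∈ e ∧ p.2 ∈ e then 1 else 0) := by
            refine Finset.sum_congr rfl fun e _ => ?_
            rw [offd e, Finset.card_filter]
        _ = ∑ p ∈ A.offDiag, (Lset.filter (fun e => p.1 ∈ e ∧ p.2 ∈ e)).card := by
            rw [Finset.sum_comm]
            exact Finset.sum_congr rfl fun p _ => (Finset.card_filter _ _).symm
        _ ≤ ∑ _p ∈ A.offDiag, 1 := by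
            refine Finset.sum_le_sum fun p hp => ?_
            exact hlin p.1 p.2 (Finset.mem_offDiag.1 hp).2.2
        _ = A.offDiag.card := by simp
        _ ≤ q ^ 2 := by rw [Finset.offDiag_card, hA, sq]; omega
    omega
  -- restrict to S
  have restr1 : ∑ e ∈ S, (e ∩ A).card = q ^ 2 := by
    rw [hS, Finset.sum_filter_of_ne, sum1]
    exact fun e _ hne => Finset.card_pos.mp (Nat.pos_of_ne_zero hne)
  have restr2 : ∑ e ∈ S, (e ∩ A).card ^ 2 ≤ 2 * q ^ 2 := by
    refine le_trans ?_ sum2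
    exact Finset.sum_le_sum_of_subset (Finset.filter_subset _ _)
  -- Cauchy-Schwarz over ℝ
  have CS := sq_sum_le_card_mul_sum_sq (s := S) (f := fun e => ((e ∩ A).card : ℝ))
  have c1 : (∑ e ∈ S, ((e ∩ A).card : ℝ)) = ((q : ℝ)) ^ 2 := by
    exact_mod_cast congrArg (Nat.cast : ℕ → ℝ) restr1
  have c2 : (∑ e ∈ S, ((e ∩ A).card : ℝ) ^ 2) ≤ 2 * (q : ℝ) ^ 2 := by
    exact_mod_cast restr2
  rw [c1] at CS
  have hq2 : (0 : ℝ) < (q : ℝ) ^ 2 := by positivity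
  have : ((q : ℝ) ^ 2) ^ 2 ≤ (S.card : ℝ) * (2 * (q : ℝ) ^ 2) := by
    refine le_trans CS ?_
    exact mul_le_mul_of_nonneg_left c2 (Nat.cast_nonneg _)
  have hfin : ((q : ℝ)) ^ 2 ≤ 2 * (S.card : ℝ) := by nlinarith
  exact_mod_cast hfin

lemma binom_tail {ι : Type*} [Fintype ι] [DecidableEq ι] (P0 : NNReal) (h0 : P0 ≤ 1)
    (S' : Finset ι) (N : ℕ) :
    Measure.pi (fun _ : ι => (PMF.bernoulli P0 h0).toMeasure)
      {f : ι → Bool | (S'.filter (fun e => f e = true)).card < N} ≤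
    (2 : ℝ≥0∞) ^ N * (1 - (P0 : ℝ≥0∞) / 2) ^ S'.card := by
  classical
  set P : ℝ≥0∞ := (P0 : ℝ≥0∞) with hP
  have h : P ≤ 1 := ENNReal.coe_le_one_iff.mpr h0
  set ν := (PMF.bernoulli P0 h0).toMeasure with hν
  set μ := Measure.pi (fun _ : ι => ν) with hμ
  have hνtrue : ν {true} = P := by
    rw [hν, PMF.toMeasure_apply_singleton _ _ (measurableSet_singleton _)]
    rfl
  have hνfalse : ν {false} = 1 - P := by
    rw [hν, PMF.toMeasure_apply_singleton _ _ (measurableSet_singleton _), PMF.bernoulli_apply]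
    simp [hP, ENNReal.coe_sub]
  set Cyl : Finset ι → Set (ι → Bool) := fun T =>
    Set.pi Set.univ (fun e : ι => if e ∈ S' then ({decide (e ∈ T)} : Set Bool) else Set.univ)
    with hCyl
  have cyl : ∀ T ∈ S'.powerset,
      μ (Cyl T) = P ^ T.card * (1 - P) ^ (S'.card - T.card) := by
    intro T hT
    have hTsub := Finset.mem_powerset.1 hT
    rw [hCyl, hμ, Measure.pi_pi]
    have key : ∀ e : ι, ν (if e ∈ S' then ({decide (e ∈ T)} : Set Bool) else Set.univ)
        = if e ∈ S' then (if e ∈ T then P else 1 - P) else 1 := by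
      intro e
      by_cases he : e ∈ S' <;> simp only [he, if_true, if_false, measure_univ]
      by_cases heT : e ∈ T <;> simp [heT, hνtrue, hνfalse]
    simp_rw [key]
    rw [Finset.prod_ite_mem, Finset.univ_inter, Finset.prod_ite, Finset.prod_const,
      Finset.prod_const]
    have e1 : S'.filter (fun e => e ∈ T) = T := by
      ext e
      simp only [Finset.mem_filter]
      exact ⟨fun h' => h'.2, fun h' => ⟨hTsub h', h'⟩⟩
    have e2 : S'.filter (fun e => e ∉ T) = S' \ T := (Finset.sdiff_eq_filter _ _).symm
    rw [e1, e2, Finset.card_sdiff_of_subset hTsub]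
  have cover : {f : ι → Bool | (S'.filter (fun e => f e = true)).card < N} ⊆
      ⋃ T ∈ (S'.powerset.filter (fun T => T.card < N)), Cyl T := by
    intro f hf
    simp only [Set.mem_setOf_eq] at hf
    refine Set.mem_iUnion₂.2 ⟨S'.filter (fun e => f e = true), ?_, ?_⟩
    · simp only [Finset.mem_filter, Finset.mem_powerset]
      exact ⟨Finset.filter_subset _ _, hf⟩
    · rw [hCyl]
      intro e _
      by_cases he : e ∈ S'
      · simp only [he, if_true, Set.mem_singleton_iff]
        rw [Bool.eq_iff_iff, decide_eq_true_eq]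
        simp [Finset.mem_filter, he]
      · simp [he]
  refine le_trans (measure_mono cover) ?_
  refine le_trans (measure_biUnion_finset_le _ _) ?_
  have step : ∀ T ∈ S'.powerset.filter (fun T => T.card < N),
      μ (Cyl T) ≤ 2 ^ N * ((P / 2) ^ T.card * (1 - P) ^ (S'.card - T.card)) := by
    intro T hT
    obtain ⟨hTp, hTN⟩ := Finset.mem_filter.1 hT
    rw [cyl T hTp]
    have hP2 : P = 2 * (P / 2) := (ENNReal.mul_div_cancel (by norm_num) (by norm_num)).symm
    have hPk : P ^ T.card ≤ 2 ^ N * (P / 2) ^ T.card := by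
      calc P ^ T.card = 2 ^ T.card * (P / 2) ^ T.card := by rw [← mul_pow, ← hP2]
        _ ≤ 2 ^ N * (P / 2) ^ T.card :=
            mul_le_mul_left (pow_le_pow_right₀ one_le_two hTN.le) _
    calc P ^ T.card * (1 - P) ^ (S'.card - T.card)
        ≤ (2 ^ N * (P / 2) ^ T.card) * (1 - P) ^ (S'.card - T.card) :=
          mul_le_mul_left hPk _
      _ = 2 ^ N * ((P / 2) ^ T.card * (1 - P) ^ (S'.card - T.card)) := by ring
  refine le_trans (Finset.sum_le_sum step) ?_
  rw [← Finset.mul_sum]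
  have sumall : ∑ T ∈ S'.powerset, (P / 2) ^ T.card * (1 - P) ^ (S'.card - T.card)
      = (P / 2 + (1 - P)) ^ S'.card := by
    have hpr := Finset.prod_add (fun _ : ι => P / 2) (fun _ : ι => 1 - P) S'
    rw [Finset.prod_const] at hpr
    rw [hpr]
    refine Finset.sum_congr rfl fun T hT => ?_
    rw [Finset.prod_const, Finset.prod_const, Finset.card_sdiff_of_subset (Finset.mem_powerset.1 hT)]
  have h2 : P / 2 ≤ 1 := le_trans ENNReal.half_le_self h
  have halfsum : P / 2 + (1 - P) = 1 - P / 2 := by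
    refine ENNReal.eq_sub_of_add_eq (ne_top_of_le_ne_top ENNReal.one_ne_top h2) ?_
    have : P / 2 + (1 - P) + P / 2 = (1 - P) + (P / 2 + P / 2) := by ring
    rw [this, ENNReal.add_halves, tsub_add_cancel_of_le h]
  refine mul_le_mul_right ?_ _
  calc ∑ T ∈ S'.powerset.filter (fun T => T.card < N),
        (P / 2) ^ T.card * (1 - P) ^ (S'.card - T.card)
      ≤ ∑ T ∈ S'.powerset, (P / 2) ^ T.card * (1 - P) ^ (S'.card - T.card) :=
        Finset.sum_le_sum_of_subset (Finset.filter_subset _ _)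
    _ = (1 - P / 2) ^ S'.card := by rw [sumall, halfsum]

set_option maxHeartbeats 2000000 in
/-- Keep each line of the affine-plane-derived hypergraph on `q²` vertices
independently with probability `α/q`, `α = (log q)²`. Then for every `ε > 0` and
every sufficiently large prime `q`, the probability that some set `A` of `q`
vertices is intersected by fewer than `αq/4` retained lines is at most `ε`. -/
theorem stmt10 (ε : ℝ) (hε : 0 < ε) :
    ∃ q₀ : ℕ, ∀ q : ℕ, q₀ ≤ q → q.Prime →
    ∀ (Lset : Finset (Finset (Fin (q ^ 2)))),
      (∀ e ∈ Lset, e.card = q) →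
      (∀ v : Fin (q ^ 2), (Lset.filter (fun e => v ∈ e)).card = q) →
      (∀ u v : Fin (q ^ 2), u ≠ v → (Lset.filter (fun e => u ∈ e ∧ v ∈ e)).card ≤ 1) →
      ∀ (h : ENNReal.ofReal ((Real.log q) ^ 2 / q) ≤ 1),
      Measure.pi (fun _ : ↥Lset =>
          (PMF.bernoulli (Real.toNNReal ((Real.log q) ^ 2 / q)) (ENNReal.coe_le_one_iff.mp h)).toMeasure)
        {f : ↥Lset → Bool | ∃ A : Finset (Fin (q ^ 2)), A.card = q ∧
          ((Lset.attach.filter (fun e => (e.1 ∩ A).Nonempty ∧ f e = true)).card : ℝ)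
            < (Real.log q) ^ 2 * q / 4}
      ≤ ENNReal.ofReal ε := by
  refine ⟨⌈Real.exp 42 + |Real.log ε| + 2⌉₊ + 16, ?_⟩
  intro q hq hqp Lset hcard hdeg hlin h
  have hq0 : 0 < q := hqp.pos
  have hqR : Real.exp 42 + |Real.log ε| + 2 ≤ (q : ℝ) := by
    calc Real.exp 42 + |Real.log ε| + 2 ≤ (⌈Real.exp 42 + |Real.log ε| + 2⌉₊ : ℝ) :=
          Nat.le_ceil _
      _ ≤ q := by
          have : ⌈Real.exp 42 + |Real.log ε| + 2⌉₊ ≤ q := le_trans (Nat.le_add_right _ 16) hq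
          exact_mod_cast this
  have habs : (0:ℝ) ≤ |Real.log ε| := abs_nonneg _
  have hexp0 : (0:ℝ) < Real.exp 42 := Real.exp_pos _
  have hexp42 : Real.exp 42 ≤ (q:ℝ) := by linarith
  have hqeps : |Real.log ε| + 2 ≤ (q:ℝ) := by linarith
  have hq16 : (16:ℝ) ≤ (q:ℝ) := by
    have : (16:ℕ) ≤ q := le_trans (Nat.le_add_left 16 _) hq
    exact_mod_cast this
  have hqpos : (0:ℝ) < (q:ℝ) := by positivity
  set L := Real.log q with hLdef
  have hL42 : (42:ℝ) ≤ L := by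
    rw [hLdef, Real.le_log_iff_exp_le hqpos]
    exact hexp42
  have hLpos : (0:ℝ) < L := lt_of_lt_of_le (by norm_num) hL42
  have hsqrt : Real.sqrt q * Real.sqrt q = (q:ℝ) := Real.mul_self_sqrt hqpos.le
  have hsqrt4 : (4:ℝ) ≤ Real.sqrt q := by nlinarith [Real.sqrt_nonneg (q:ℝ)]
  have hLq2 : L ≤ (q:ℝ) / 2 := by
    have h1 : L = 2 * Real.log (Real.sqrt q) := by
      rw [hLdef, Real.log_sqrt hqpos.le]; ring
    have h2 : Real.log (Real.sqrt q) ≤ Real.sqrt q - 1 :=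
      Real.log_le_sub_one_of_pos (by nlinarith)
    nlinarith
  set p := L ^ 2 / (q:ℝ) with hpdef
  have hp0 : (0:ℝ) ≤ p := by positivity
  have hp1 : p ≤ 1 := ENNReal.ofReal_le_one.1 h
  set P := ENNReal.ofReal p with hPdef
  set N := ⌈L ^ 2 * (q:ℝ) / 4⌉₊ with hNdef
  set M := q ^ 2 / 2 with hMdef
  set ν := (PMF.bernoulli (Real.toNNReal p) (ENNReal.coe_le_one_iff.mp h)).toMeasure with hν
  set μ := Measure.pi (fun _ : ↥Lset => ν) with hμ
  set 𝒜 := Finset.powersetCard q (Finset.univ : Finset (Fin (q ^ 2))) with h𝒜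
  have cover : {f : ↥Lset → Bool | ∃ A : Finset (Fin (q ^ 2)), A.card = q ∧
        ((Lset.attach.filter (fun e => (e.1 ∩ A).Nonempty ∧ f e = true)).card : ℝ)
          < L ^ 2 * q / 4} ⊆
      ⋃ A ∈ 𝒜, {f : ↥Lset → Bool |
        ((Lset.attach.filter (fun e => (e.1 ∩ A).Nonempty ∧ f e = true)).card : ℝ)
          < L ^ 2 * q / 4} := by
    rintro f ⟨A, hA, hlt⟩
    exact Set.mem_iUnion₂.2 ⟨A, Finset.mem_powersetCard_univ.2 hA, hlt⟩
  refine le_trans (measure_mono cover) ?_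
  refine le_trans (measure_biUnion_finset_le _ _) ?_
  have heq : (1:ℝ≥0∞) - P / 2 = ENNReal.ofReal (1 - p / 2) := by
    rw [ENNReal.ofReal_sub _ (by positivity), ENNReal.ofReal_one, hPdef,
      ENNReal.ofReal_div_of_pos (by norm_num : (0:ℝ) < 2)]
    norm_num
  have perA : ∀ A ∈ 𝒜, μ {f : ↥Lset → Bool |
      ((Lset.attach.filter (fun e => (e.1 ∩ A).Nonempty ∧ f e = true)).card : ℝ)
          < L ^ 2 * q / 4}
      ≤ (2:ℝ≥0∞) ^ N * ENNReal.ofReal (1 - p / 2) ^ M := by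
    intro A hA
    have hAq : A.card = q := Finset.mem_powersetCard_univ.1 hA
    have hmany := aux_lines hq0 Lset hdeg hlin A hAq
    have hScard : (Lset.attach.filter (fun e => (e.1 ∩ A).Nonempty)).card
        = (Lset.filter (fun e => (e ∩ A).Nonempty)).card := by
      rw [Finset.filter_attach (fun e => (e ∩ A).Nonempty) Lset, Finset.card_map,
        Finset.card_attach]
    have hMS : M ≤ (Lset.attach.filter (fun e => (e.1 ∩ A).Nonempty)).card := by
      have h1 : 2 * M ≤ q ^ 2 := by
        rw [hMdef, mul_comm]
        exact Nat.div_mul_le_self _ _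
      have h2 : 2 * M ≤ 2 * (Lset.attach.filter (fun e => (e.1 ∩ A).Nonempty)).card := by
        rw [hScard]
        exact le_trans h1 hmany
      exact Nat.le_of_mul_le_mul_left h2 (by norm_num)
    obtain ⟨S', hS'sub, hS'card⟩ := Finset.exists_subset_card_eq hMS
    have hsub : {f : ↥Lset → Bool |
        ((Lset.attach.filter (fun e => (e.1 ∩ A).Nonempty ∧ f e = true)).card : ℝ)
            < L ^ 2 * q / 4} ⊆
        {f : ↥Lset → Bool | (S'.filter (fun e => f e = true)).card < N} := by
      intro f hf
      simp only [Set.mem_setOf_eq] at hf ⊢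
      rw [hNdef, Nat.lt_ceil]
      refine lt_of_le_of_lt ?_ hf
      have hss : S'.filter (fun e => f e = true) ⊆
          Lset.attach.filter (fun e => (e.1 ∩ A).Nonempty ∧ f e = true) := by
        intro e he
        obtain ⟨heS', hfe⟩ := Finset.mem_filter.1 he
        have heS := hS'sub heS'
        obtain ⟨hea, hne⟩ := Finset.mem_filter.1 heS
        exact Finset.mem_filter.2 ⟨hea, hne, hfe⟩
      exact_mod_cast Nat.cast_le.2 (Finset.card_le_card hss)
    have htail := binom_tail (Real.toNNReal p) (ENNReal.coe_le_one_iff.mp h) S' N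
    change _ ≤ _ * (1 - P / 2) ^ _ at htail
    rw [hS'card, heq] at htail
    exact le_trans (measure_mono hsub) htail
  refine le_trans (Finset.sum_le_sum perA) ?_
  rw [Finset.sum_const, nsmul_eq_mul]
  have h𝒜card : 𝒜.card = (q ^ 2).choose q := by
    rw [h𝒜, Finset.card_powersetCard, Finset.card_univ, Fintype.card_fin]
  rw [h𝒜card]
  -- numerics
  have hN : (N:ℝ) ≤ L ^ 2 * q / 4 + 1 := by
    rw [hNdef]
    exact (Nat.ceil_lt_add_one (by positivity)).le
  have hM : ((q:ℝ) ^ 2 - 1) / 2 ≤ (M:ℝ) := by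
    have h1 : q ^ 2 ≤ 2 * M + 1 := by
      rw [hMdef]
      generalize q ^ 2 = Q
      omega
    have h2 : ((q:ℝ)) ^ 2 ≤ 2 * (M:ℝ) + 1 := by exact_mod_cast h1
    linarith
  have hpM : L ^ 2 * q / 4 - L ^ 2 ≤ p / 2 * (M:ℝ) := by
    have hk : p / 2 * (M:ℝ) = L ^ 2 * (M:ℝ) / (2 * q) := by
      rw [hpdef]; ring
    rw [hk, le_div_iff₀ (by positivity : (0:ℝ) < 2 * q)]
    nlinarith [hM, sq_nonneg L, hqpos, hLpos]
  have hlog2a : (0:ℝ) ≤ Real.log 2 := Real.log_nonneg one_le_two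
  have hlog2b : Real.log 2 ≤ 0.7 := by linarith [Real.log_two_lt_d9]
  have hexpineq : 2 * q * L + N * Real.log 2 - p / 2 * M ≤ Real.log ε := by
    have A1 : (N:ℝ) * Real.log 2 ≤ (L ^ 2 * q / 4 + 1) * 0.7 := by
      calc (N:ℝ) * Real.log 2 ≤ (L ^ 2 * q / 4 + 1) * Real.log 2 :=
            mul_le_mul_of_nonneg_right hN hlog2a
        _ ≤ (L ^ 2 * q / 4 + 1) * 0.7 := by
            refine mul_le_mul_of_nonneg_left hlog2b ?_
            positivity
    have B1 : L * L ≤ (q / 2) * L := mul_le_mul_of_nonneg_right hLq2 hLpos.le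
    have B2 : 42 * ((q:ℝ) * L) ≤ L * (q * L) :=
      mul_le_mul_of_nonneg_right hL42 (mul_nonneg hqpos.le hLpos.le)
    have B3 : 42 * (q:ℝ) ≤ q * L := by
      nlinarith [mul_le_mul_of_nonneg_left hL42 hqpos.le]
    have B4 : -|Real.log ε| ≤ Real.log ε := neg_abs_le _
    nlinarith [A1, B1, B2, B3, B4, hpM, hqeps, hqpos.le, hLpos.le]
  -- convert to ofReal
  have e1 : ((q ^ 2).choose q : ℝ≥0∞) = ENNReal.ofReal ((q ^ 2).choose q : ℝ) :=
    (ENNReal.ofReal_natCast _).symm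
  have e2 : (2:ℝ≥0∞) ^ N = ENNReal.ofReal ((2:ℝ) ^ N) := by
    rw [ENNReal.ofReal_pow (by norm_num : (0:ℝ) ≤ 2)]
    norm_num
  have e3 : ENNReal.ofReal (1 - p / 2) ^ M = ENNReal.ofReal ((1 - p / 2) ^ M) := by
    rw [ENNReal.ofReal_pow (by linarith : (0:ℝ) ≤ 1 - p / 2)]
  rw [e1, e2, e3,
    ← ENNReal.ofReal_mul (show (0:ℝ) ≤ (2:ℝ) ^ N by positivity),
    ← ENNReal.ofReal_mul (show (0:ℝ) ≤ (((q ^ 2).choose q : ℕ) : ℝ) from Nat.cast_nonneg _)]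
  refine ENNReal.ofReal_le_ofReal ?_
  -- real inequality
  have hqexp : (q:ℝ) = Real.exp L := (Real.exp_log hqpos).symm
  have t1 : ((q ^ 2).choose q : ℝ) ≤ Real.exp (2 * q * L) := by
    have hc : ((q ^ 2).choose q : ℝ) ≤ ((q:ℝ) ^ 2) ^ q := by
      have := Nat.choose_le_pow (q ^ 2) q
      calc ((q ^ 2).choose q : ℝ) ≤ ((q ^ 2) ^ q : ℕ) := by exact_mod_cast this
        _ = ((q:ℝ) ^ 2) ^ q := by push_cast; ring
    refine le_trans hc (le_of_eq ?_)
    calc ((q:ℝ) ^ 2) ^ q = (q:ℝ) ^ (2 * q) := by rw [pow_mul]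
      _ = Real.exp L ^ (2 * q) := by rw [← hqexp]
      _ = Real.exp ((2 * q : ℕ) * L) := (Real.exp_nat_mul _ _).symm
      _ = Real.exp (2 * q * L) := by push_cast; ring_nf
  have t2 : (2:ℝ) ^ N = Real.exp (N * Real.log 2) := by
    rw [Real.exp_nat_mul, Real.exp_log (by norm_num : (0:ℝ) < 2)]
  have t3 : (1 - p / 2) ^ M ≤ Real.exp (-(p / 2) * M) := by
    have h1 : 1 - p / 2 ≤ Real.exp (-(p / 2)) := by
      have := Real.add_one_le_exp (-(p / 2))
      linarith
    calc (1 - p / 2) ^ M ≤ Real.exp (-(p / 2)) ^ M :=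
          pow_le_pow_left₀ (by linarith) h1 M
      _ = Real.exp (-(p / 2) * M) := by rw [← Real.exp_nat_mul, mul_comm]
  calc ((q ^ 2).choose q : ℝ) * ((2:ℝ) ^ N * (1 - p / 2) ^ M)
      ≤ Real.exp (2 * q * L) * (Real.exp (N * Real.log 2) * Real.exp (-(p / 2) * M)) := by
        refine mul_le_mul t1 ?_
          (mul_nonneg (by positivity) (pow_nonneg (by linarith) M)) (Real.exp_pos _).le
        rw [t2]
        refine mul_le_mul_of_nonneg_left t3 (Real.exp_pos _).le
    _ = Real.exp (2 * q * L + N * Real.log 2 - p / 2 * M) := by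
        rw [← Real.exp_add, ← Real.exp_add]
        congr 1
        ring
    _ ≤ Real.exp (Real.log ε) := Real.exp_le_exp.2 hexpineq
    _ = ε := Real.exp_log hε
end

section
/- For every integer β ≥ 2 and s ≥ 2 with s ≤ β, the complete balanced s-partite graph with parts of size 2β contains at least β² edge-disjoint copies of K_s. -/
/-- For `2 ≤ s ≤ β` with `β ≥ 2`, the complete balanced `s`-partite graph with parts
of size `2β` contains at least `β²` edge-disjoint copies of `K_s`. -/
theorem stmt12 (β s : ℕ) (hβ : 2 ≤ β) (hs2 : 2 ≤ s) (hsβ : s ≤ β) :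
    ∃ C : Finset (Finset (Fin s × Fin (2 * β))),
      β ^ 2 ≤ C.card ∧
      (∀ T ∈ C,
        (SimpleGraph.fromRel (fun a b : Fin s × Fin (2 * β) => a.1 ≠ b.1)).IsNClique s T) ∧
      (∀ T₁ ∈ C, ∀ T₂ ∈ C, T₁ ≠ T₂ → (T₁ ∩ T₂).card ≤ 1) := by
  obtain ⟨p, hp, hβp, hp2β⟩ := Nat.exists_prime_lt_and_le_two_mul β (by omega)
  haveI : Fact p.Prime := ⟨hp⟩
  have hps : s ≤ p := hsβ.trans hβp.le
  have hvlt : ∀ x : ZMod p, x.val < 2 * β := fun x => lt_of_lt_of_le (ZMod.val_lt x) hp2β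
  -- cast of Fin s into ZMod p is injective
  have hcast : ∀ i j : Fin s, ((i : ℕ) : ZMod p) = ((j : ℕ) : ZMod p) → i = j := by
    intro i j h
    have hi : (((i : ℕ) : ZMod p)).val = (i : ℕ) := ZMod.val_cast_of_lt (lt_of_lt_of_le i.2 hps)
    have hj : (((j : ℕ) : ZMod p)).val = (j : ℕ) := ZMod.val_cast_of_lt (lt_of_lt_of_le j.2 hps)
    have : (i : ℕ) = (j : ℕ) := by rw [← hi, ← hj, h]
    exact Fin.ext this
  set f : ZMod p × ZMod p → Fin s → Fin s × Fin (2 * β) :=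
    fun ab i => (i, ⟨(ab.1 + (i : ℕ) * ab.2).val, hvlt _⟩) with hf
  have hfinj : ∀ ab, Function.Injective (f ab) := by
    intro ab i j h
    exact congrArg Prod.fst h
  set T : ZMod p × ZMod p → Finset (Fin s × Fin (2 * β)) :=
    fun ab => Finset.image (f ab) Finset.univ with hT
  -- membership characterization
  have hmem : ∀ ab z, z ∈ T ab → z = f ab z.1 := by
    intro ab z hz
    simp only [hT, Finset.mem_image, Finset.mem_univ, true_and] at hz
    obtain ⟨i, hi⟩ := hz
    have : i = z.1 := by rw [← hi]
    rw [← this, hi]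
  -- key equation extraction
  have heq : ∀ ab ab' (i : Fin s), f ab i = f ab' i →
      ab.1 + (i : ℕ) * ab.2 = ab'.1 + (i : ℕ) * ab'.2 := by
    intro ab ab' i h
    have h2 : (ab.1 + (i : ℕ) * ab.2).val = (ab'.1 + (i : ℕ) * ab'.2).val := by
      have := congrArg Prod.snd h
      simpa [hf] using congrArg Fin.val this
    exact ZMod.val_injective p h2
  -- two shared points force equal parameters
  have hkey : ∀ ab ab' z₁ z₂, z₁ ∈ T ab → z₁ ∈ T ab' → z₂ ∈ T ab → z₂ ∈ T ab' →
      z₁ ≠ z₂ → ab = ab' := by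
    intro ab ab' z₁ z₂ h1 h1' h2 h2' hne
    have e1 : f ab z₁.1 = f ab' z₁.1 := by rw [← hmem ab z₁ h1, hmem ab' z₁ h1']
    have e2 : f ab z₂.1 = f ab' z₂.1 := by rw [← hmem ab z₂ h2, hmem ab' z₂ h2']
    have hne' : z₁.1 ≠ z₂.1 := by
      intro h
      apply hne
      rw [hmem ab z₁ h1, hmem ab z₂ h2, h]
    have q1 := heq ab ab' z₁.1 e1
    have q2 := heq ab ab' z₂.1 e2
    have hc : ((z₁.1 : ℕ) : ZMod p) ≠ ((z₂.1 : ℕ) : ZMod p) := fun h => hne' (hcast _ _ h)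
    have hbb : ab.2 = ab'.2 := by
      have hsub : (((z₁.1 : ℕ) : ZMod p) - ((z₂.1 : ℕ) : ZMod p)) * ab.2
          = (((z₁.1 : ℕ) : ZMod p) - ((z₂.1 : ℕ) : ZMod p)) * ab'.2 := by ring_nf; linear_combination q1 - q2
      exact mul_left_cancel₀ (sub_ne_zero.mpr hc) hsub
    have haa : ab.1 = ab'.1 := by
      have := q1
      rw [hbb] at this
      exact add_right_cancel this
    exact Prod.ext haa hbb
  refine ⟨Finset.image T Finset.univ, ?_, ?_, ?_⟩
  · have hTinj : Function.Injective T := by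
      intro ab ab' h
      have h2 : 2 ≤ (T ab).card := by
        have : (T ab).card = s := by
          rw [hT]
          rw [Finset.card_image_of_injective _ (hfinj ab)]
          simp
        omega
      obtain ⟨z₁, hz₁, z₂, hz₂, hzne⟩ := Finset.one_lt_card.mp (by omega : 1 < (T ab).card)
      exact hkey ab ab' z₁ z₂ hz₁ (h ▸ hz₁) hz₂ (h ▸ hz₂) hzne
    rw [Finset.card_image_of_injective _ hTinj]
    simp only [Finset.card_univ, Fintype.card_prod, ZMod.card]
    calc β ^ 2 = β * β := sq β
    _ ≤ p * p := Nat.mul_le_mul hβp.le hβp.le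
  · intro t ht
    simp only [Finset.mem_image, Finset.mem_univ, true_and] at ht
    obtain ⟨ab, rfl⟩ := ht
    constructor
    · intro x hx y hy hxy
      have hx' := hmem ab x (Finset.mem_coe.mp hx)
      have hy' := hmem ab y (Finset.mem_coe.mp hy)
      have h1 : x.1 ≠ y.1 := by
        intro h
        apply hxy
        rw [hx', hy', h]
      simp only [SimpleGraph.fromRel_adj]
      exact ⟨hxy, Or.inl h1⟩
    · rw [hT]
      rw [Finset.card_image_of_injective _ (hfinj ab)]
      simp
  · intro T₁ hT₁ T₂ hT₂ hne
    simp only [Finset.mem_image, Finset.mem_univ, true_and] at hT₁ hT₂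
    obtain ⟨ab, rfl⟩ := hT₁
    obtain ⟨ab', rfl⟩ := hT₂
    by_contra hcard
    push_neg at hcard
    obtain ⟨z₁, hz₁, z₂, hz₂, hzne⟩ := Finset.one_lt_card.mp hcard
    simp only [Finset.mem_inter] at hz₁ hz₂
    exact hne (congrArg T (hkey ab ab' z₁ z₂ hz₁.1 hz₁.2 hz₂.1 hz₂.2 hzne))
end

section
/- Let D be a dependency digraph for events E1, ..., Ek in a probability space (i.e., each Ei is mutually independent of all Ej with (i,j) ∉ D). Suppose there exist reals z1,...,zk with 0 ≤ zi < 1 and Pr(Ei) ≤ zi · ∏_{(i,j)∈D} (1 − zj) for all i. Then Pr(⋂_{i=1}^k complement(Ei)) > 0. -/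
open MeasureTheory Finset

private lemma lll_aux_sub {Ω : Type} [MeasurableSpace Ω] (μ : Measure Ω)
    [IsProbabilityMeasure μ] {A X : Set Ω} (hA : MeasurableSet A) {w : ENNReal}
    (h : μ (A ∩ X) ≤ w * μ X) : (1 - w) * μ X ≤ μ (Aᶜ ∩ X) := by
  have hXA : Aᶜ ∩ X = X \ A := by rw [Set.diff_eq, Set.inter_comm]
  have hadd : μ (X ∩ A) + μ (X \ A) = μ X := measure_inter_add_diff X hA
  have h' : μ (X ∩ A) ≤ w * μ X := by rwa [Set.inter_comm]
  have hfin : μ X ≠ ⊤ := measure_ne_top μ X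
  rw [hXA]
  calc (1 - w) * μ X = 1 * μ X - w * μ X := by
        rw [ENNReal.sub_mul]; intro _ _; exact hfin
    _ = μ X - w * μ X := by rw [one_mul]
    _ ≤ μ X - μ (X ∩ A) := tsub_le_tsub_left h' _
    _ ≤ μ (X \ A) := by
        rw [tsub_le_iff_right, ← hadd, add_comm]

/-- The general (asymmetric) Lovász Local Lemma. `D` is a dependency digraph for the
events `E i`: each `E i` is mutually independent of all the events `E j` with
`(i,j) ∉ D`. If there are reals `0 ≤ zᵢ < 1` with
`Pr(Eᵢ) ≤ zᵢ · ∏_{(i,j)∈D} (1 − zⱼ)`, then with positive probability no `Eᵢ` occurs. -/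
theorem stmt19 {Ω : Type} [MeasurableSpace Ω] (μ : MeasureTheory.Measure Ω)
    [MeasureTheory.IsProbabilityMeasure μ]
    (k : ℕ) (E : Fin k → Set Ω) (hmeas : ∀ i, MeasurableSet (E i))
    (D : Fin k → Fin k → Prop) [DecidableRel D]
    (hindep : ∀ i : Fin k,
      ProbabilityTheory.Indep
        (MeasurableSpace.generateFrom {E i})
        (MeasurableSpace.generateFrom {A : Set Ω | ∃ j : Fin k, j ≠ i ∧ ¬ D i j ∧ A = E j})
        μ)
    (z : Fin k → ℝ) (hz0 : ∀ i, 0 ≤ z i) (hz1 : ∀ i, z i < 1)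
    (hbound : ∀ i, μ (E i) ≤ ENNReal.ofReal
      (z i * ∏ j ∈ Finset.univ.filter (fun j => D i j), (1 - z j))) :
    0 < μ (⋂ i, (E i)ᶜ) := by
  set w : Fin k → ENNReal := fun i => ENNReal.ofReal (z i) with hw
  have hw1 : ∀ i, w i < 1 := fun i => by
    simpa [hw] using ENNReal.ofReal_lt_one.mpr (hz1 i)
  -- translate the bound into ENNReal
  have hbound' : ∀ i, μ (E i) ≤
      w i * ∏ j ∈ Finset.univ.filter (fun j => D i j), (1 - w j) := by
    intro i
    refine (hbound i).trans (le_of_eq ?_)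
    rw [ENNReal.ofReal_mul (hz0 i),
      ENNReal.ofReal_prod_of_nonneg (fun j _ => by linarith [hz1 j])]
    congr 1
    refine Finset.prod_congr rfl fun j _ => ?_
    rw [ENNReal.ofReal_sub 1 (hz0 j), ENNReal.ofReal_one]
  -- key inductive claim
  have key : ∀ S : Finset (Fin k), ∀ i,
      μ (E i ∩ ⋂ j ∈ S, (E j)ᶜ) ≤ w i * μ (⋂ j ∈ S, (E j)ᶜ) := by
    intro S
    induction S using Finset.strongInduction with
    | _ S ih =>
      intro i
      by_cases hiS : i ∈ S
      · have hsub : (⋂ j ∈ (S : Finset (Fin k)), (E j)ᶜ) ⊆ (E i)ᶜ :=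
          Set.biInter_subset_of_mem hiS
        have : E i ∩ ⋂ j ∈ S, (E j)ᶜ = ∅ := by
          apply Set.eq_empty_of_subset_empty
          intro x hx
          exact hsub hx.2 hx.1
        simp [this]
      · set S₁ : Finset (Fin k) := S.filter (fun j => D i j) with hS₁
        set S₂ : Finset (Fin k) := S.filter (fun j => ¬ D i j) with hS₂
        have hS₁S : S₁ ⊆ S := Finset.filter_subset _ _
        have hS₂S : S₂ ⊆ S := Finset.filter_subset _ _
        have hunion : S₂ ∪ S₁ = S := by
          rw [Finset.union_comm]
          exact Finset.filter_union_filter_not_eq _ S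
        -- peeling lemma
        have peel : ∀ T : Finset (Fin k), T ⊆ S₁ →
            (∏ j ∈ T, (1 - w j)) * μ (⋂ j ∈ S₂, (E j)ᶜ) ≤
              μ (⋂ j ∈ S₂ ∪ T, (E j)ᶜ) := by
          intro T
          induction T using Finset.induction with
          | empty => simp
          | @insert a T ha ihT =>
            intro hsub
            have haS₁ : a ∈ S₁ := hsub (Finset.mem_insert_self a T)
            have hTS₁ : T ⊆ S₁ := fun x hx => hsub (Finset.mem_insert_of_mem hx)
            have hproper : S₂ ∪ T ⊂ S := by
              constructor
              · exact Finset.union_subset hS₂S (hTS₁.trans hS₁S)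
              · intro hSsub
                have haST : a ∈ S₂ ∪ T := hSsub (hS₁S haS₁)
                rcases Finset.mem_union.mp haST with h | h
                · exact (Finset.mem_filter.mp h).2 (Finset.mem_filter.mp haS₁).2
                · exact ha h
            have hkey := ih (S₂ ∪ T) hproper a
            have hstep := lll_aux_sub μ (hmeas a) hkey
            have heq : (⋂ j ∈ S₂ ∪ insert a T, (E j)ᶜ) =
                (E a)ᶜ ∩ ⋂ j ∈ S₂ ∪ T, (E j)ᶜ := by
              rw [Finset.union_insert, Finset.set_biInter_insert]
            rw [heq, Finset.prod_insert ha, mul_assoc]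
            exact le_trans (mul_le_mul_right (ihT hTS₁) _) hstep
        -- independence
        have hm1 : MeasurableSet[MeasurableSpace.generateFrom {E i}] (E i) :=
          MeasurableSpace.measurableSet_generateFrom rfl
        have hm2 : MeasurableSet[MeasurableSpace.generateFrom
            {A : Set Ω | ∃ j : Fin k, j ≠ i ∧ ¬ D i j ∧ A = E j}]
            (⋂ j ∈ S₂, (E j)ᶜ) := by
          refine Finset.measurableSet_biInter S₂ fun j hj => ?_
          have hjS : j ∈ S := hS₂S hj
          have hji : j ≠ i := fun h => hiS (h ▸ hjS)
          have hnd : ¬ D i j := (Finset.mem_filter.mp hj).2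
          have hmemb : E j ∈ {A : Set Ω | ∃ j' : Fin k, j' ≠ i ∧ ¬ D i j' ∧ A = E j'} :=
            ⟨j, hji, hnd, rfl⟩
          exact (MeasurableSpace.measurableSet_generateFrom hmemb).compl
        have hind : μ (E i ∩ ⋂ j ∈ S₂, (E j)ᶜ) =
            μ (E i) * μ (⋂ j ∈ S₂, (E j)ᶜ) :=
          (ProbabilityTheory.Indep_iff _ _ μ).mp (hindep i) _ _ hm1 hm2
        -- product monotonicity
        have hprodmono : (∏ j ∈ Finset.univ.filter (fun j => D i j), (1 - w j)) ≤
            ∏ j ∈ S₁, (1 - w j) := by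
          have hsub : S₁ ⊆ Finset.univ.filter (fun j => D i j) := fun x hx =>
            Finset.mem_filter.mpr ⟨Finset.mem_univ x, (Finset.mem_filter.mp hx).2⟩
          rw [← Finset.prod_sdiff hsub]
          calc (∏ j ∈ Finset.univ.filter (fun j => D i j) \ S₁, (1 - w j)) *
                ∏ j ∈ S₁, (1 - w j)
              ≤ 1 * ∏ j ∈ S₁, (1 - w j) := by
                apply mul_le_mul_left
                exact Finset.prod_le_one' fun j _ => tsub_le_self.trans le_rfl
            _ = ∏ j ∈ S₁, (1 - w j) := one_mul _
        -- chain
        have hmono : μ (E i ∩ ⋂ j ∈ S, (E j)ᶜ) ≤ μ (E i ∩ ⋂ j ∈ S₂, (E j)ᶜ) := by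
          apply measure_mono
          apply Set.inter_subset_inter_right
          exact Set.biInter_subset_biInter_left (fun x hx => hS₂S hx)
        calc μ (E i ∩ ⋂ j ∈ S, (E j)ᶜ)
            ≤ μ (E i ∩ ⋂ j ∈ S₂, (E j)ᶜ) := hmono
          _ = μ (E i) * μ (⋂ j ∈ S₂, (E j)ᶜ) := hind
          _ ≤ (w i * ∏ j ∈ Finset.univ.filter (fun j => D i j), (1 - w j)) *
                μ (⋂ j ∈ S₂, (E j)ᶜ) := mul_le_mul_left (hbound' i) _
          _ ≤ (w i * ∏ j ∈ S₁, (1 - w j)) * μ (⋂ j ∈ S₂, (E j)ᶜ) :=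
              mul_le_mul_left (mul_le_mul_right hprodmono _) _
          _ = w i * ((∏ j ∈ S₁, (1 - w j)) * μ (⋂ j ∈ S₂, (E j)ᶜ)) := by ring
          _ ≤ w i * μ (⋂ j ∈ S₂ ∪ S₁, (E j)ᶜ) :=
              mul_le_mul_right (peel S₁ le_rfl) _
          _ = w i * μ (⋂ j ∈ S, (E j)ᶜ) := by rw [hunion]
  -- positivity
  have pos : ∀ S : Finset (Fin k), 0 < μ (⋂ j ∈ S, (E j)ᶜ) := by
    intro S
    induction S using Finset.induction with
    | empty => simp
    | @insert a S ha ihp =>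
      have hstep := lll_aux_sub μ (hmeas a) (key S a)
      have heq : (⋂ j ∈ insert a S, (E j)ᶜ) = (E a)ᶜ ∩ ⋂ j ∈ S, (E j)ᶜ :=
        Finset.set_biInter_insert _ _ _
      rw [heq]
      refine lt_of_lt_of_le ?_ hstep
      apply ENNReal.mul_pos
      · exact (tsub_pos_iff_lt.mpr (hw1 a)).ne'
      · exact ihp.ne'
  have := pos Finset.univ
  simpa using this
end
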